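/- arXiv:2408.04980 — 4 statements merged into one kernel-verified Lean document; each statement's English description precedes it below -/
import Mathlib

section
/- (Courbage; characterization of the Liouville superoperator.) A Hilbert–Schmidt operator A on ℋ belongs to Dom 𝐇 if and only if A·Dom H ⊆ Dom H, the commutator [H,A] defined on Dom H is a bounded operator, and its closure overline[H,A] is Hilbert–Schmidt; in that case 𝐇A = overline[H,A]. -/
open Filter Topology ContinuousLinearMap
open scoped InnerProductSpace

noncomputable section

namespace LiouvilleFormalization

variable {H : Type*} [NormedAddCommGroup H] [InnerProductSpace ℂ H] [CompleteSpace H]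

/-- `A` is Hilbert–Schmidt with respect to the orthonormal basis `e`
(equivalently, with respect to every orthonormal basis). -/
def IsHS (e : HilbertBasis ℕ ℂ H) (A : H →L[ℂ] H) : Prop :=
  Summable fun n => ‖A (e n)‖ ^ 2

/-- The Hilbert–Schmidt norm of `A` computed in the orthonormal basis `e`. -/
def hsNorm (e : HilbertBasis ℕ ℂ H) (A : H →L[ℂ] H) : ℝ :=
  Real.sqrt (∑' n, ‖A (e n)‖ ^ 2)

/-- The Hilbert–Schmidt inner product `⟨A, B⟩_HS = Σₙ ⟨A eₙ, B eₙ⟩`. -/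
def hsInner (e : HilbertBasis ℕ ℂ H) (A B : H →L[ℂ] H) : ℂ :=
  ∑' n, (inner ℂ (A (e n)) (B (e n)) : ℂ)

/-- The conjugation superoperator `A ↦ U(t) A U(t)*`. -/
def conjSup (U : ℝ → H →L[ℂ] H) (t : ℝ) (A : H →L[ℂ] H) : H →L[ℂ] H :=
  U t ∘L A ∘L adjoint (U t)

/-- `U` is a strongly continuous one-parameter unitary group. -/
structure IsUnitaryGroup (U : ℝ → H →L[ℂ] H) : Prop where
  map_zero : U 0 = 1
  map_add : ∀ t s : ℝ, U (t + s) = U t ∘L U s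
  unitary_left : ∀ t : ℝ, adjoint (U t) ∘L U t = 1
  unitary_right : ∀ t : ℝ, U t ∘L adjoint (U t) = 1
  strong_continuous : ∀ ψ : H, Continuous fun t : ℝ => U t ψ

/-- A densely defined operator is self-adjoint if it coincides with its adjoint. -/
def IsSelfAdjointOp (T : H →ₗ.[ℂ] H) : Prop :=
  Dense (T.domain : Set H) ∧ T.adjoint = T

/-- `T` is the infinitesimal generator of the unitary group `U`, i.e. `U(t) = e^{-itT}`:
the domain of `T` is exactly the set of vectors where the strong derivative at `t = 0`
exists, and there the derivative equals `-i T ψ`. -/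
structure IsGenerator (U : ℝ → H →L[ℂ] H) (T : H →ₗ.[ℂ] H) : Prop where
  mem_dom : ∀ ψ : H,
    ψ ∈ T.domain ↔ ∃ L : H, Tendsto (fun t : ℝ => t⁻¹ • (U t ψ - ψ)) (𝓝[≠] 0) (𝓝 L)
  deriv : ∀ ψ : T.domain,
    Tendsto (fun t : ℝ => t⁻¹ • (U t ψ - (ψ : H))) (𝓝[≠] 0) (𝓝 ((-Complex.I) • T ψ))

/-- `L = 𝐇 A`: membership of `A` in the domain of the Liouville superoperator `𝐇`
generated by `U`, together with the value `𝐇 A = L`: the difference quotient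
`(U(t) A U(t)* - A)/t` converges in Hilbert–Schmidt norm to `-i L`. -/
def HasLiouville (e : HilbertBasis ℕ ℂ H) (U : ℝ → H →L[ℂ] H) (A L : H →L[ℂ] H) : Prop :=
  IsHS e A ∧ IsHS e L ∧
    Tendsto (fun t : ℝ => hsNorm e (t⁻¹ • (conjSup U t A - A) - (-Complex.I) • L))
      (𝓝[≠] 0) (𝓝 0)

/-- The commutator `[T, A] ψ = T(Aψ) - A(Tψ)` on the domain of `T`, for `A` mapping
`Dom T` into itself. -/
def commAt (T : H →ₗ.[ℂ] H) (A : H →L[ℂ] H)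
    (hm : ∀ x : T.domain, (A x : H) ∈ T.domain) (ψ : T.domain) : H :=
  T ⟨A ψ, hm ψ⟩ - A (T ψ)

section Proofs

open scoped ENNReal NNReal

section Basics

variable (e : HilbertBasis ℕ ℂ H)

lemma parseval_hasSum (x : H) : HasSum (fun n => ‖(⟪e n, x⟫_ℂ)‖ ^ 2) (‖x‖ ^ 2) := by
  have h := (e.hasSum_inner_mul_inner x x).mapL Complex.reCLM
  simp only [Complex.reCLM_apply] at h
  have k1 : ∀ n, (⟪x, e n⟫_ℂ * ⟪e n, x⟫_ℂ).re = ‖(⟪e n, x⟫_ℂ)‖ ^ 2 := fun n => by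
    rw [← inner_conj_symm x (e n), mul_comm, Complex.mul_conj]
    rw [Complex.normSq_eq_norm_sq]; simp [← Complex.ofReal_pow]
  have k2 : (⟪x, x⟫_ℂ).re = ‖x‖ ^ 2 := by
    rw [inner_self_eq_norm_sq_to_K (𝕜 := ℂ) x]; simp [← Complex.ofReal_pow]
  simpa only [k1, k2] using h


/-- The Hilbert–Schmidt "norm squared" in `ℝ≥0∞`. -/
def sumSq (X : H →L[ℂ] H) : ℝ≥0∞ := ∑' n, (‖X (e n)‖₊ : ℝ≥0∞) ^ 2

lemma parseval_ennreal (x : H) : ∑' n, (‖(⟪e n, x⟫_ℂ)‖₊ : ℝ≥0∞) ^ 2 = (‖x‖₊ : ℝ≥0∞) ^ 2 := by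
  have h : HasSum (fun n => (‖(⟪e n, x⟫_ℂ)‖₊ ^ 2 : ℝ≥0)) (‖x‖₊ ^ 2) := by
    rw [← NNReal.hasSum_coe]; push_cast; exact parseval_hasSum e x
  rw [← ENNReal.coe_pow, ← h.tsum_eq, ENNReal.coe_tsum h.summable]
  push_cast; rfl

lemma isHS_iff (X : H →L[ℂ] H) : IsHS e X ↔ sumSq e X ≠ ⊤ := by
  rw [IsHS, sumSq]
  have h1 : ∀ n, ‖X (e n)‖ ^ 2 = ((‖X (e n)‖₊ ^ 2 : ℝ≥0) : ℝ) := fun n => by push_cast; ring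
  simp_rw [h1, NNReal.summable_coe, ← ENNReal.tsum_coe_ne_top_iff_summable, ENNReal.coe_pow]

lemma hsNorm_eq (X : H →L[ℂ] H) : hsNorm e X = Real.sqrt (sumSq e X).toReal := by
  rw [hsNorm, sumSq, ENNReal.tsum_toReal_eq (fun n => by simp [ENNReal.pow_ne_top])]
  congr 1


lemma sumSq_apply_le (X : H →L[ℂ] H) (ψ : H) :
    (‖X ψ‖₊ : ℝ≥0∞) ^ 2 ≤ (‖ψ‖₊ : ℝ≥0∞) ^ 2 * sumSq e (ContinuousLinearMap.adjoint X) := by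
  rw [← parseval_ennreal e (X ψ)]
  calc ∑' n, (‖⟪e n, X ψ⟫_ℂ‖₊ : ℝ≥0∞) ^ 2
      = ∑' n, (‖⟪ContinuousLinearMap.adjoint X (e n), ψ⟫_ℂ‖₊ : ℝ≥0∞) ^ 2 := by
        congr 1; ext n; rw [ContinuousLinearMap.adjoint_inner_left]
    _ ≤ ∑' n, ((‖ContinuousLinearMap.adjoint X (e n)‖₊ * ‖ψ‖₊ : ℝ≥0) : ℝ≥0∞) ^ 2 := by
        apply ENNReal.tsum_le_tsum; intro n
        gcongr
        exact_mod_cast nnnorm_inner_le_nnnorm (𝕜 := ℂ) _ _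
    _ = (‖ψ‖₊ : ℝ≥0∞) ^ 2 * sumSq e (ContinuousLinearMap.adjoint X) := by
        rw [sumSq, ← ENNReal.tsum_mul_left]
        congr 1; ext n; push_cast; ring

lemma sumSq_adjoint (X : H →L[ℂ] H) :
    sumSq e (ContinuousLinearMap.adjoint X) = sumSq e X := by
  have key : ∀ Y : H →L[ℂ] H,
      sumSq e Y = ∑' n, ∑' m, (‖⟪e m, Y (e n)⟫_ℂ‖₊ : ℝ≥0∞) ^ 2 := fun Y => by
    simp_rw [sumSq, ← parseval_ennreal e]
  rw [key, key, ENNReal.tsum_comm]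
  congr 1; ext m; congr 1; ext n
  have h2 : ‖⟪e m, ContinuousLinearMap.adjoint X (e n)⟫_ℂ‖ = ‖⟪e n, X (e m)⟫_ℂ‖ := by
    rw [norm_inner_symm, ContinuousLinearMap.adjoint_inner_left,
      norm_inner_symm]
  have h3 : ‖⟪e m, ContinuousLinearMap.adjoint X (e n)⟫_ℂ‖₊ = ‖⟪e n, X (e m)⟫_ℂ‖₊ :=
    NNReal.eq (by rw [coe_nnnorm, coe_nnnorm, h2])
  rw [h3]

lemma isHS_adjoint_iff (X : H →L[ℂ] H) :
    IsHS e (ContinuousLinearMap.adjoint X) ↔ IsHS e X := by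
  rw [isHS_iff, isHS_iff, sumSq_adjoint]

lemma hsNorm_adjoint (X : H →L[ℂ] H) :
    hsNorm e (ContinuousLinearMap.adjoint X) = hsNorm e X := by
  rw [hsNorm_eq, hsNorm_eq, sumSq_adjoint]

lemma apply_norm_le {X : H →L[ℂ] H} (hX : IsHS e X) (ψ : H) :
    ‖X ψ‖ ≤ hsNorm e X * ‖ψ‖ := by
  have h1 : (‖X ψ‖₊ : ℝ≥0∞) ^ 2 ≤ (‖ψ‖₊ : ℝ≥0∞) ^ 2 * sumSq e X := by
    simpa [sumSq_adjoint] using sumSq_apply_le e X ψ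
  have hfin : sumSq e X ≠ ⊤ := (isHS_iff e X).1 hX
  have h2 : ‖X ψ‖ ^ 2 ≤ ‖ψ‖ ^ 2 * (sumSq e X).toReal := by
    have h3 := ENNReal.toReal_mono (ENNReal.mul_ne_top (ENNReal.pow_ne_top ENNReal.coe_ne_top) hfin) h1
    simpa [ENNReal.toReal_pow, ENNReal.toReal_mul] using h3
  calc ‖X ψ‖ = Real.sqrt (‖X ψ‖ ^ 2) := (Real.sqrt_sq (norm_nonneg _)).symm
    _ ≤ Real.sqrt (‖ψ‖ ^ 2 * (sumSq e X).toReal) := Real.sqrt_le_sqrt h2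
    _ = ‖ψ‖ * Real.sqrt (sumSq e X).toReal := by
        rw [Real.sqrt_mul (by positivity), Real.sqrt_sq (norm_nonneg _)]
    _ = hsNorm e X * ‖ψ‖ := by rw [hsNorm_eq]; ring

lemma rpow_two_eq (a : ℝ) : a ^ (2 : ℝ≥0∞).toReal = a ^ 2 := by
  rw [ENNReal.toReal_ofNat, show ((2:ℝ)) = ((2:ℕ):ℝ) by norm_num, Real.rpow_natCast]

lemma isHS_iff_memℓp (X : H →L[ℂ] H) :
    IsHS e X ↔ Memℓp (fun n => X (e n)) 2 := by
  rw [IsHS, memℓp_gen_iff (by rw [ENNReal.toReal_ofNat]; norm_num)]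
  simp_rw [rpow_two_eq]

lemma IsHS.sub {X Y : H →L[ℂ] H} (hX : IsHS e X) (hY : IsHS e Y) : IsHS e (X - Y) := by
  rw [isHS_iff_memℓp] at hX hY ⊢
  exact hX.sub hY

lemma IsHS.smul {𝕜 : Type*} [NormedRing 𝕜] [Module 𝕜 H] [IsBoundedSMul 𝕜 H]
    [SMulCommClass ℂ 𝕜 H] [ContinuousConstSMul 𝕜 H]
    (c : 𝕜) {X : H →L[ℂ] H} (hX : IsHS e X) : IsHS e (c • X) := by
  rw [isHS_iff_memℓp] at hX ⊢
  exact hX.const_smul c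

lemma IsHS.comp_left (W : H →L[ℂ] H) {X : H →L[ℂ] H} (hX : IsHS e X) :
    IsHS e (W ∘L X) := by
  apply Summable.of_nonneg_of_le (fun n => by positivity)
    (fun n => ?_) (hX.mul_left (‖W‖ ^ 2))
  calc ‖(W ∘L X) (e n)‖ ^ 2 ≤ (‖W‖ * ‖X (e n)‖) ^ 2 :=
        pow_le_pow_left₀ (norm_nonneg _) (W.le_opNorm _) 2
    _ = ‖W‖ ^ 2 * ‖X (e n)‖ ^ 2 := by ring

lemma IsHS.comp_right (W : H →L[ℂ] H) {X : H →L[ℂ] H} (hX : IsHS e X) :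
    IsHS e (X ∘L W) := by
  rw [← isHS_adjoint_iff, ContinuousLinearMap.adjoint_comp]
  exact IsHS.comp_left e _ ((isHS_adjoint_iff e X).2 hX)

open scoped Classical in
/-- The embedding of Hilbert–Schmidt operators into `ℓ²(ℕ, H)`. -/
def hsToLp (X : H →L[ℂ] H) : lp (fun _ : ℕ => H) 2 :=
  if h : IsHS e X then ⟨fun n => X (e n), (isHS_iff_memℓp e X).1 h⟩ else 0

lemma hsToLp_coeFn {X : H →L[ℂ] H} (h : IsHS e X) :
    (hsToLp e X : ∀ _ : ℕ, H) = fun n => X (e n) := by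
  rw [hsToLp, dif_pos h]

lemma hsToLp_apply {X : H →L[ℂ] H} (h : IsHS e X) (n : ℕ) :
    (hsToLp e X : ∀ _ : ℕ, H) n = X (e n) := by rw [hsToLp_coeFn e h]

lemma norm_hsToLp {X : H →L[ℂ] H} (h : IsHS e X) : ‖hsToLp e X‖ = hsNorm e X := by
  rw [lp.norm_eq_tsum_rpow (by rw [ENNReal.toReal_ofNat]; norm_num) _, hsNorm]
  simp_rw [hsToLp_apply e h, rpow_two_eq]
  rw [Real.sqrt_eq_rpow]
  norm_num

lemma IsHS.add {X Y : H →L[ℂ] H} (hX : IsHS e X) (hY : IsHS e Y) : IsHS e (X + Y) := by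
  rw [isHS_iff_memℓp] at hX hY ⊢
  exact hX.add hY

lemma hsToLp_add {X Y : H →L[ℂ] H} (hX : IsHS e X) (hY : IsHS e Y) :
    hsToLp e (X + Y) = hsToLp e X + hsToLp e Y := by
  ext n
  rw [lp.coeFn_add, Pi.add_apply, hsToLp_apply e hX, hsToLp_apply e hY,
    hsToLp_apply e (hX.add e hY)]
  rfl

lemma hsToLp_smul {𝕜 : Type*} [NormedField 𝕜] [NormedSpace 𝕜 H]
    [SMulCommClass ℂ 𝕜 H] (c : 𝕜) {X : H →L[ℂ] H} (hX : IsHS e X) :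
    hsToLp e (c • X) = c • hsToLp e X := by
  ext n
  rw [lp.coeFn_smul, Pi.smul_apply, hsToLp_apply e hX, hsToLp_apply e (hX.smul e c)]
  rfl

lemma hsToLp_sub {X Y : H →L[ℂ] H} (hX : IsHS e X) (hY : IsHS e Y) :
    hsToLp e (X - Y) = hsToLp e X - hsToLp e Y := by
  ext n
  rw [lp.coeFn_sub, Pi.sub_apply, hsToLp_apply e hX, hsToLp_apply e hY,
    hsToLp_apply e (hX.sub e hY)]  -- note argument order may be off
  rfl

end Basics


section Group

variable {U : ℝ → H →L[ℂ] H} (hU : IsUnitaryGroup U)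
include hU

lemma IsUnitaryGroup.norm_apply (t : ℝ) (x : H) : ‖U t x‖ = ‖x‖ := by
  have h1 := ContinuousLinearMap.adjoint_inner_left (U t) x (U t x)
  have h2 : ContinuousLinearMap.adjoint (U t) (U t x) = x := by
    have := congrArg (fun W : H →L[ℂ] H => W x) (hU.unitary_left t)
    simpa using this
  rw [h2, inner_self_eq_norm_sq_to_K (𝕜 := ℂ), inner_self_eq_norm_sq_to_K (𝕜 := ℂ)] at h1
  have h3 : ‖x‖ ^ 2 = ‖U t x‖ ^ 2 := by exact_mod_cast h1
  have h4 := congrArg Real.sqrt h3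
  rwa [Real.sqrt_sq (norm_nonneg _), Real.sqrt_sq (norm_nonneg _), eq_comm] at h4

lemma IsUnitaryGroup.adjoint_eq (t : ℝ) :
    ContinuousLinearMap.adjoint (U t) = U (-t) := by
  have h1 : U t ∘L U (-t) = 1 := by
    rw [← hU.map_add]; simp [hU.map_zero]
  calc ContinuousLinearMap.adjoint (U t)
      = ContinuousLinearMap.adjoint (U t) ∘L (U t ∘L U (-t)) := by
        rw [h1]; ext x; simp
    _ = (ContinuousLinearMap.adjoint (U t) ∘L U t) ∘L U (-t) := by
        rw [ContinuousLinearMap.comp_assoc]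
    _ = U (-t) := by rw [hU.unitary_left]; ext x; simp

lemma IsUnitaryGroup.comm (a b : ℝ) : U a (U b x) = U b (U a x) := by
  have h1 : U a ∘L U b = U b ∘L U a := by rw [← hU.map_add, ← hU.map_add, add_comm]
  exact congrArg (fun W : H →L[ℂ] H => W x) h1

lemma IsUnitaryGroup.tendsto_apply {l : Filter ℝ}
    (hl : Tendsto (fun t : ℝ => t) l (𝓝 0)) {f : ℝ → H} {x : H}
    (hf : Tendsto f l (𝓝 x)) : Tendsto (fun t => U t (f t)) l (𝓝 x) := by
  rw [tendsto_iff_norm_sub_tendsto_zero]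
  have hb : ∀ t, ‖U t (f t) - x‖ ≤ ‖f t - x‖ + ‖U t x - x‖ := fun t => by
    calc ‖U t (f t) - x‖ = ‖(U t (f t) - U t x) + (U t x - x)‖ := by
          rw [sub_add_sub_cancel]
      _ ≤ ‖U t (f t) - U t x‖ + ‖U t x - x‖ := norm_add_le _ _
      _ = ‖f t - x‖ + ‖U t x - x‖ := by rw [← map_sub, hU.norm_apply]
  have h2 : Tendsto (fun t => ‖f t - x‖ + ‖U t x - x‖) l (𝓝 0) := by
    have ha : Tendsto (fun t => ‖f t - x‖) l (𝓝 0) :=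
      tendsto_iff_norm_sub_tendsto_zero.1 hf
    have hbb : Tendsto (fun t => ‖U t x - x‖) l (𝓝 0) := by
      have hc : Tendsto (fun t : ℝ => U t x) (𝓝 0) (𝓝 x) := by
        have := (hU.strong_continuous x).tendsto 0
        simpa [hU.map_zero] using this
      exact tendsto_iff_norm_sub_tendsto_zero.1 (hc.comp hl)
    simpa using ha.add hbb
  exact squeeze_zero (fun t => norm_nonneg _) hb h2

lemma IsUnitaryGroup.continuous_apply {g : ℝ → H} (hg : Continuous g) :
    Continuous fun s => U s (g s) := by
  rw [continuous_iff_continuousAt]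
  intro s₀
  rw [ContinuousAt, tendsto_iff_norm_sub_tendsto_zero]
  have hb : ∀ s, ‖U s (g s) - U s₀ (g s₀)‖ ≤ ‖g s - g s₀‖ + ‖U s (g s₀) - U s₀ (g s₀)‖ :=
    fun s => by
    calc ‖U s (g s) - U s₀ (g s₀)‖
        = ‖(U s (g s) - U s (g s₀)) + (U s (g s₀) - U s₀ (g s₀))‖ := by
          rw [sub_add_sub_cancel]
      _ ≤ ‖U s (g s) - U s (g s₀)‖ + ‖U s (g s₀) - U s₀ (g s₀)‖ := norm_add_le _ _
      _ = ‖g s - g s₀‖ + ‖U s (g s₀) - U s₀ (g s₀)‖ := by rw [← map_sub, hU.norm_apply]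
  have h2 : Tendsto (fun s => ‖g s - g s₀‖ + ‖U s (g s₀) - U s₀ (g s₀)‖) (𝓝 s₀) (𝓝 0) := by
    have ha : Tendsto (fun s => ‖g s - g s₀‖) (𝓝 s₀) (𝓝 0) :=
      tendsto_iff_norm_sub_tendsto_zero.1 (hg.tendsto s₀)
    have hbb : Tendsto (fun s => ‖U s (g s₀) - U s₀ (g s₀)‖) (𝓝 s₀) (𝓝 0) :=
      tendsto_iff_norm_sub_tendsto_zero.1 ((hU.strong_continuous (g s₀)).tendsto s₀)
    simpa using ha.add hbb
  exact squeeze_zero (fun s => norm_nonneg _) hb h2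

end Group


section Generator

variable {U : ℝ → H →L[ℂ] H} {T : H →ₗ.[ℂ] H}

lemma deriv_U (hU : IsUnitaryGroup U) (hgen : IsGenerator U T) (s : ℝ) (ψ : T.domain) :
    Tendsto (fun t : ℝ => t⁻¹ • (U t (U s (ψ : H)) - U s (ψ : H))) (𝓝[≠] 0)
      (𝓝 (U s ((-Complex.I) • T ψ))) := by
  have h1 : (fun t : ℝ => t⁻¹ • (U t (U s (ψ : H)) - U s (ψ : H)))
      = fun t : ℝ => U s (t⁻¹ • (U t (ψ : H) - (ψ : H))) := by
    funext t
    rw [hU.comm, ← map_sub, ← (U s).map_smul_of_tower]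
  rw [h1]
  exact ((U s).continuous.tendsto _).comp (hgen.deriv ψ)

lemma mem_dom_U (hU : IsUnitaryGroup U) (hgen : IsGenerator U T) (s : ℝ) (ψ : T.domain) :
    U s (ψ : H) ∈ T.domain :=
  (hgen.mem_dom _).2 ⟨_, deriv_U hU hgen s ψ⟩

lemma T_U_comm (hU : IsUnitaryGroup U) (hgen : IsGenerator U T) (s : ℝ) (ψ : T.domain) :
    T ⟨U s (ψ : H), mem_dom_U hU hgen s ψ⟩ = U s (T ψ) := by
  have h1 := hgen.deriv ⟨U s (ψ : H), mem_dom_U hU hgen s ψ⟩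
  have h2 := deriv_U hU hgen s ψ
  have h3 := tendsto_nhds_unique h1 h2
  have h4 : (-Complex.I) • T ⟨U s (ψ : H), mem_dom_U hU hgen s ψ⟩
      = (-Complex.I) • (U s (T ψ)) := by rw [h3, map_smul]
  exact smul_right_injective H (neg_ne_zero.2 Complex.I_ne_zero) h4

lemma deriv_neg (hgen : IsGenerator U T) (ψ : T.domain) :
    Tendsto (fun t : ℝ => t⁻¹ • (U (-t) (ψ : H) - (ψ : H))) (𝓝[≠] (0:ℝ))
      (𝓝 (Complex.I • T ψ)) := by
  have hneg : Tendsto (fun t : ℝ => -t) (𝓝[≠] (0:ℝ)) (𝓝[≠] (0:ℝ)) := by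
    refine Tendsto.inf ?_ ?_
    · simpa using continuous_neg.tendsto (0:ℝ)
    · rw [Filter.tendsto_principal]
      rw [Filter.eventually_principal]
      intro x hx
      simp only [Set.mem_compl_iff, Set.mem_singleton_iff, neg_eq_zero] at hx ⊢
      exact hx
  have h7 := ((hgen.deriv ψ).comp hneg).neg
  have h10 := h7.congr (f₂ := fun t : ℝ => t⁻¹ • (U (-t) (ψ : H) - (ψ : H))) ?_
  · simpa only [neg_smul, neg_neg] using h10
  · intro t
    simp only [Function.comp_apply]
    rw [inv_neg, neg_smul, neg_neg]

lemma conjSup_eval (hU : IsUnitaryGroup U) (s : ℝ) (X : H →L[ℂ] H) (x : H) :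
    conjSup U s X x = U s (X (U (-s) x)) := by
  simp [conjSup, hU.adjoint_eq]

lemma conj_id (hU : IsUnitaryGroup U) (A : H →L[ℂ] H) (t : ℝ) (x : H) :
    t⁻¹ • (conjSup U t A x - A x)
      = U t (A (t⁻¹ • (U (-t) x - x))) + t⁻¹ • (U t (A x) - A x) := by
  have h1 : conjSup U t A x = U t (A (U (-t) x)) := conjSup_eval hU t A x
  have h2 : A (t⁻¹ • (U (-t) x - x)) = t⁻¹ • (A (U (-t) x) - A x) := by
    rw [A.map_smul_of_tower, map_sub]
  have h3 : U t (t⁻¹ • (A (U (-t) x) - A x))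
      = t⁻¹ • (U t (A (U (-t) x)) - U t (A x)) := by
    rw [(U t).map_smul_of_tower, map_sub]
  rw [h1, h2, h3, ← smul_add, sub_add_sub_cancel]

lemma key_forward (e : HilbertBasis ℕ ℂ H) (hU : IsUnitaryGroup U)
    (hgen : IsGenerator U T) {A L : H →L[ℂ] H}
    (hL : HasLiouville e U A L) (ψ : T.domain) :
    ∃ h : (A (ψ : H)) ∈ T.domain, T ⟨A (ψ : H), h⟩ = L (ψ : H) + A (T ψ) := by
  obtain ⟨hA, hLHS, htend⟩ := hL
  set X : ℝ → H →L[ℂ] H :=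
    fun t => t⁻¹ • (conjSup U t A - A) - (-Complex.I) • L with hXdef
  have hXHS : ∀ t, IsHS e (X t) := by
    intro t
    have h1 : IsHS e (conjSup U t A) :=
      IsHS.comp_left e (U t) (IsHS.comp_right e _ hA)
    exact IsHS.sub e (IsHS.smul e t⁻¹ (IsHS.sub e h1 hA)) (IsHS.smul e (-Complex.I) hLHS)
  have hpt : ∀ φ : H, Tendsto (fun t => X t φ) (𝓝[≠] (0:ℝ)) (𝓝 0) := by
    intro φ
    apply squeeze_zero_norm (fun t => apply_norm_le e (hXHS t) φ)
    simpa only [zero_mul] using htend.mul_const ‖φ‖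
  -- the total difference quotient tends to -I • L ψ
  have htot : Tendsto (fun t : ℝ => t⁻¹ • (conjSup U t A (ψ : H) - A (ψ : H)))
      (𝓝[≠] (0:ℝ)) (𝓝 ((-Complex.I) • L (ψ : H))) := by
    have h5 := (hpt (ψ : H)).add_const ((-Complex.I) • L (ψ : H))
    simp only [hXdef, ContinuousLinearMap.sub_apply, ContinuousLinearMap.smul_apply,
      sub_add_cancel, zero_add] at h5
    exact h5
  -- first summand
  have hv : Tendsto (fun t : ℝ => t⁻¹ • (U (-t) (ψ : H) - (ψ : H))) (𝓝[≠] (0:ℝ))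
      (𝓝 (Complex.I • T ψ)) := deriv_neg hgen ψ
  have hAv : Tendsto (fun t : ℝ => A (t⁻¹ • (U (-t) (ψ:H) - (ψ:H)))) (𝓝[≠] (0:ℝ))
      (𝓝 (A (Complex.I • T ψ))) := (A.continuous.tendsto _).comp hv
  have hfirst : Tendsto (fun t : ℝ => U t (A (t⁻¹ • (U (-t) (ψ:H) - (ψ:H))))) (𝓝[≠] (0:ℝ))
      (𝓝 (A (Complex.I • T ψ))) :=
    hU.tendsto_apply (tendsto_id.mono_left nhdsWithin_le_nhds) hAv
  have hid : ∀ t : ℝ, t⁻¹ • (conjSup U t A (ψ:H) - A (ψ:H))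
      = U t (A (t⁻¹ • (U (-t) (ψ:H) - (ψ:H)))) + t⁻¹ • (U t (A (ψ:H)) - A (ψ:H)) :=
    fun t => conj_id hU A t (ψ:H)
  have hsecond : Tendsto (fun t : ℝ => t⁻¹ • (U t (A (ψ:H)) - A (ψ:H))) (𝓝[≠] (0:ℝ))
      (𝓝 ((-Complex.I) • L (ψ:H) - A (Complex.I • T ψ))) := by
    refine (htot.sub hfirst).congr fun t => ?_
    rw [hid t, add_sub_cancel_left]
  have hmem : A (ψ:H) ∈ T.domain := (hgen.mem_dom _).2 ⟨_, hsecond⟩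
  refine ⟨hmem, ?_⟩
  have h1 := hgen.deriv ⟨A (ψ:H), hmem⟩
  have h2 := tendsto_nhds_unique h1 hsecond
  have h3 : (-Complex.I) • T ⟨A (ψ:H), hmem⟩ = (-Complex.I) • (L (ψ:H) + A (T ψ)) := by
    rw [h2, map_smul]
    module
  exact smul_right_injective H (neg_ne_zero.2 Complex.I_ne_zero) h3

end Generator

section Duhamel

variable (e : HilbertBasis ℕ ℂ H) {U : ℝ → H →L[ℂ] H} {T : H →ₗ.[ℂ] H}

/-- Evaluation at an index, as a continuous linear map on `ℓ²(ℕ, H)`. -/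
def evalCLM (n : ℕ) : lp (fun _ : ℕ => H) 2 →L[ℂ] H :=
  LinearMap.mkContinuous
    { toFun := fun f => f n
      map_add' := fun f g => by simp [lp.coeFn_add]
      map_smul' := fun c f => by simp [lp.coeFn_smul] }
    1 (fun f => by
      show ‖f n‖ ≤ 1 * ‖f‖; simpa using lp.norm_apply_le_norm (by norm_num : (2 : ℝ≥0∞) ≠ 0) f n)

lemma evalCLM_apply (n : ℕ) (f : lp (fun _ : ℕ => H) 2) : evalCLM n f = f n := rfl

lemma hsNorm_unitary_left (hU : IsUnitaryGroup U) (t : ℝ) (X : H →L[ℂ] H) :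
    hsNorm e (U t ∘L X) = hsNorm e X := by
  rw [hsNorm, hsNorm]
  congr 1
  exact tsum_congr fun n => by rw [ContinuousLinearMap.comp_apply, hU.norm_apply]

lemma tendsto_hsNorm_left (hU : IsUnitaryGroup U) {C : H →L[ℂ] H} (hC : IsHS e C)
    (s₀ : ℝ) :
    Tendsto (fun s => hsNorm e ((U s - U s₀) ∘L C)) (𝓝 s₀) (𝓝 0) := by
  have h1 : Tendsto (fun s => ∑' n, ‖((U s - U s₀) ∘L C) (e n)‖ ^ 2) (𝓝 s₀)
      (𝓝 (∑' _ : ℕ, (0:ℝ))) := by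
    apply tendsto_tsum_of_dominated_convergence (bound := fun n => 4 * ‖C (e n)‖ ^ 2)
      (hC.mul_left 4)
    · intro n
      have hc : Tendsto (fun s => U s (C (e n)) - U s₀ (C (e n))) (𝓝 s₀) (𝓝 0) := by
        have := (hU.strong_continuous (C (e n))).tendsto s₀
        simpa using this.sub_const (U s₀ (C (e n)))
      have := (hc.norm).pow 2
      simpa using this
    · filter_upwards with s n
      have hb : ‖U s (C (e n)) - U s₀ (C (e n))‖ ≤ 2 * ‖C (e n)‖ := by
        calc ‖U s (C (e n)) - U s₀ (C (e n))‖
            ≤ ‖U s (C (e n))‖ + ‖U s₀ (C (e n))‖ := norm_sub_le _ _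
          _ = 2 * ‖C (e n)‖ := by rw [hU.norm_apply, hU.norm_apply]; ring
      have hnn : (0:ℝ) ≤ ‖U s (C (e n)) - U s₀ (C (e n))‖ := norm_nonneg _
      calc ‖‖((U s - U s₀) ∘L C) (e n)‖ ^ 2‖
          = ‖U s (C (e n)) - U s₀ (C (e n))‖ ^ 2 := by
            rw [Real.norm_eq_abs, abs_of_nonneg (by positivity)]; rfl
        _ ≤ (2 * ‖C (e n)‖) ^ 2 := by
            apply pow_le_pow_left₀ hnn hb
        _ = 4 * ‖C (e n)‖ ^ 2 := by ring
  rw [tsum_zero] at h1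
  have h2 := (Real.continuous_sqrt.tendsto 0).comp h1
  simp only [Real.sqrt_zero] at h2
  exact h2.congr fun s => by rw [Function.comp_apply, hsNorm]

lemma isHS_conjSup (hU : IsUnitaryGroup U) (s : ℝ) {X : H →L[ℂ] H} (hX : IsHS e X) :
    IsHS e (conjSup U s X) :=
  IsHS.comp_left e (U s) (IsHS.comp_right e _ hX)

lemma conjSup_zero (hU : IsUnitaryGroup U) (X : H →L[ℂ] H) : conjSup U 0 X = X := by
  have h1 : ContinuousLinearMap.adjoint (U 0) = U 0 := by
    rw [hU.adjoint_eq, neg_zero]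
  rw [conjSup, h1, hU.map_zero]
  ext x; simp

lemma conj_continuous (hU : IsUnitaryGroup U) {B : H →L[ℂ] H} (hB : IsHS e B) :
    Continuous fun s => hsToLp e (conjSup U s B) := by
  rw [continuous_iff_continuousAt]
  intro s₀
  rw [ContinuousAt, tendsto_iff_norm_sub_tendsto_zero]
  -- decompose the difference
  have hdec : ∀ s : ℝ, conjSup U s B - conjSup U s₀ B
      = (U s ∘L (B ∘L (ContinuousLinearMap.adjoint (U s)
          - ContinuousLinearMap.adjoint (U s₀))))
        + ((U s - U s₀) ∘L (B ∘L ContinuousLinearMap.adjoint (U s₀))) := by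
    intro s
    ext x
    simp only [conjSup, ContinuousLinearMap.comp_apply, ContinuousLinearMap.sub_apply,
      ContinuousLinearMap.add_apply, map_sub]
    abel
  have hP : ∀ s : ℝ, IsHS e (U s ∘L (B ∘L (ContinuousLinearMap.adjoint (U s)
      - ContinuousLinearMap.adjoint (U s₀)))) := fun s =>
    IsHS.comp_left e _ (IsHS.comp_right e _ hB)
  have hQ : ∀ s : ℝ, IsHS e ((U s - U s₀) ∘L (B ∘L ContinuousLinearMap.adjoint (U s₀))) :=
    fun s => IsHS.comp_left e _ (IsHS.comp_right e _ hB)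
  have hC1 : IsHS e (ContinuousLinearMap.adjoint B) := (isHS_adjoint_iff e B).2 hB
  have hC2 : IsHS e (B ∘L ContinuousLinearMap.adjoint (U s₀)) := IsHS.comp_right e _ hB
  -- bound
  have hbound : ∀ s : ℝ, ‖hsToLp e (conjSup U s B) - hsToLp e (conjSup U s₀ B)‖
      ≤ hsNorm e ((U s - U s₀) ∘L ContinuousLinearMap.adjoint B)
        + hsNorm e ((U s - U s₀) ∘L (B ∘L ContinuousLinearMap.adjoint (U s₀))) := by
    intro s
    have h3 : hsToLp e (conjSup U s B) - hsToLp e (conjSup U s₀ B)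
        = hsToLp e (conjSup U s B - conjSup U s₀ B) :=
      (hsToLp_sub e (isHS_conjSup e hU s hB) (isHS_conjSup e hU s₀ hB)).symm
    rw [h3, hdec s, hsToLp_add e (hP s) (hQ s)]
    refine (norm_add_le _ _).trans ?_
    rw [norm_hsToLp e (hP s), norm_hsToLp e (hQ s)]
    gcongr
    -- hsNorm (U s ∘ (B ∘ (U s† - U s₀†))) = hsNorm ((U s - U s₀) ∘ B†)
    rw [hsNorm_unitary_left e hU]
    rw [← hsNorm_adjoint e (B ∘L (ContinuousLinearMap.adjoint (U s)
      - ContinuousLinearMap.adjoint (U s₀)))]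
    have h4 : ContinuousLinearMap.adjoint (B ∘L (ContinuousLinearMap.adjoint (U s)
        - ContinuousLinearMap.adjoint (U s₀)))
        = (U s - U s₀) ∘L ContinuousLinearMap.adjoint B := by
      rw [ContinuousLinearMap.adjoint_comp, map_sub,
        ContinuousLinearMap.adjoint_adjoint, ContinuousLinearMap.adjoint_adjoint]
    rw [h4]
  have hlim : Tendsto (fun s => hsNorm e ((U s - U s₀) ∘L ContinuousLinearMap.adjoint B)
      + hsNorm e ((U s - U s₀) ∘L (B ∘L ContinuousLinearMap.adjoint (U s₀)))) (𝓝 s₀)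
      (𝓝 0) := by
    have := (tendsto_hsNorm_left e hU hC1 s₀).add (tendsto_hsNorm_left e hU hC2 s₀)
    simpa using this
  exact squeeze_zero (fun s => norm_nonneg _) hbound hlim

lemma deriv_conj_zero (hU : IsUnitaryGroup U) (hgen : IsGenerator U T)
    {A B : H →L[ℂ] H} (hm : ∀ x : T.domain, (A x : H) ∈ T.domain)
    (hB : ∀ ψ : T.domain, B ψ = commAt T A hm ψ) (ψ : T.domain) :
    Tendsto (fun r : ℝ => r⁻¹ • (conjSup U r A (ψ:H) - A (ψ:H))) (𝓝[≠] (0:ℝ))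
      (𝓝 ((-Complex.I) • B (ψ:H))) := by
  have hv := deriv_neg hgen ψ
  have hAv : Tendsto (fun t : ℝ => A (t⁻¹ • (U (-t) (ψ:H) - (ψ:H)))) (𝓝[≠] (0:ℝ))
      (𝓝 (A (Complex.I • T ψ))) := (A.continuous.tendsto _).comp hv
  have hfirst : Tendsto (fun t : ℝ => U t (A (t⁻¹ • (U (-t) (ψ:H) - (ψ:H))))) (𝓝[≠] (0:ℝ))
      (𝓝 (A (Complex.I • T ψ))) :=
    hU.tendsto_apply (tendsto_id.mono_left nhdsWithin_le_nhds) hAv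
  have hsecond := hgen.deriv ⟨A (ψ:H), hm ψ⟩
  have htot := hfirst.add hsecond
  have heq : A (Complex.I • T ψ) + (-Complex.I) • T ⟨A (ψ:H), hm ψ⟩
      = (-Complex.I) • B (ψ:H) := by
    rw [hB ψ, commAt, map_smul]
    module
  rw [heq] at htot
  refine htot.congr fun t => ?_
  exact (conj_id hU A t (ψ:H)).symm

lemma conjSup_add_eval (hU : IsUnitaryGroup U) (s u : ℝ) (X : H →L[ℂ] H) (x : H) :
    conjSup U (s + u) X x = U s (conjSup U u X (U (-s) x)) := by
  rw [conjSup_eval hU, conjSup_eval hU]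
  have h1 : U (s + u) (X (U (-(s+u)) x)) = U s (U u (X (U (-(s+u)) x))) := by
    rw [hU.map_add s u]; rfl
  have h2 : U (-(s+u)) x = U (-u) (U (-s) x) := by
    rw [show -(s+u) = -u + -s by ring, hU.map_add]; rfl
  rw [h1, h2]

lemma hasDerivAt_conj (hU : IsUnitaryGroup U) (hgen : IsGenerator U T)
    {A B : H →L[ℂ] H} (hm : ∀ x : T.domain, (A x : H) ∈ T.domain)
    (hB : ∀ ψ : T.domain, B ψ = commAt T A hm ψ) (ψ : T.domain) (s : ℝ) :
    HasDerivAt (fun r : ℝ => conjSup U r A (ψ:H))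
      ((-Complex.I) • conjSup U s B (ψ:H)) s := by
  rw [hasDerivAt_iff_tendsto_slope_zero]
  set φ : T.domain := ⟨U (-s) (ψ:H), mem_dom_U hU hgen (-s) ψ⟩ with hφ
  have hkey := deriv_conj_zero hU hgen hm hB φ
  have hUs := ((U s).continuous.tendsto _).comp hkey
  have hlim : U s ((-Complex.I) • B (φ:H)) = (-Complex.I) • conjSup U s B (ψ:H) := by
    rw [map_smul, conjSup_eval hU]
  rw [hlim] at hUs
  refine hUs.congr fun u => ?_
  simp only [Function.comp_apply]
  rw [(U s).map_smul_of_tower, map_sub, ← conjSup_add_eval hU s u A (ψ:H)]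
  have h2 : U s (A (φ:H)) = conjSup U s A (ψ:H) := (conjSup_eval hU s A (ψ:H)).symm
  rw [h2]

lemma integrand_continuous (hU : IsUnitaryGroup U) (B : H →L[ℂ] H) (y : H) :
    Continuous fun s : ℝ => (-Complex.I) • conjSup U s B y := by
  apply Continuous.const_smul
  have h1 : (fun s : ℝ => conjSup U s B y) = fun s : ℝ => U s (B (U (-s) y)) := by
    funext s; exact conjSup_eval hU s B y
  rw [h1]
  exact hU.continuous_apply (B.continuous.comp ((hU.strong_continuous y).comp continuous_neg))

lemma duhamel_apply (hU : IsUnitaryGroup U) (hgen : IsGenerator U T)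
    (hdense : Dense (T.domain : Set H)) {A B : H →L[ℂ] H}
    (hm : ∀ x : T.domain, (A x : H) ∈ T.domain)
    (hB : ∀ ψ : T.domain, B ψ = commAt T A hm ψ) (t : ℝ) (x : H) :
    conjSup U t A x - A x
      = ∫ s in (0:ℝ)..t, (-Complex.I) • conjSup U s B x := by
  have hint : ∀ z : H, IntervalIntegrable (fun s => (-Complex.I) • conjSup U s B z)
      MeasureTheory.volume 0 t := fun z => (integrand_continuous hU B z).intervalIntegrable 0 t
  have hdom : ∀ ψ : T.domain, conjSup U t A (ψ:H) - A (ψ:H)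
      = ∫ s in (0:ℝ)..t, (-Complex.I) • conjSup U s B (ψ:H) := by
    intro ψ
    have h2 := intervalIntegral.integral_eq_sub_of_hasDerivAt
      (f := fun r : ℝ => conjSup U r A (ψ:H))
      (f' := fun s : ℝ => (-Complex.I) • conjSup U s B (ψ:H))
      (fun s _ => hasDerivAt_conj hU hgen hm hB ψ s) (hint (ψ:H))
    rw [h2]
    rw [conjSup_zero hU]
  set S := {x : H | conjSup U t A x - A x
    = ∫ s in (0:ℝ)..t, (-Complex.I) • conjSup U s B x} with hS
  have hclosed : IsClosed S := by
    apply isClosed_eq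
    · exact ((conjSup U t A).continuous.sub A.continuous)
    · have hlip : LipschitzWith (‖B‖₊ * Real.toNNReal |t|)
          (fun x : H => ∫ s in (0:ℝ)..t, (-Complex.I) • conjSup U s B x) := by
        apply LipschitzWith.of_dist_le_mul
        intro x y
        rw [dist_eq_norm, dist_eq_norm, ← intervalIntegral.integral_sub (hint x) (hint y)]
        have hb : ∀ s ∈ Set.uIoc (0:ℝ) t,
            ‖(-Complex.I) • conjSup U s B x - (-Complex.I) • conjSup U s B y‖
              ≤ ‖B‖ * ‖x - y‖ := by
          intro s _
          rw [← smul_sub, norm_smul]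
          simp only [norm_neg, Complex.norm_I, one_mul]
          rw [← map_sub]
          calc ‖conjSup U s B (x - y)‖ = ‖B (U (-s) (x - y))‖ := by
                rw [conjSup_eval hU, hU.norm_apply]
            _ ≤ ‖B‖ * ‖U (-s) (x - y)‖ := B.le_opNorm _
            _ = ‖B‖ * ‖x - y‖ := by rw [hU.norm_apply]
        have h5 := intervalIntegral.norm_integral_le_of_norm_le_const hb
        rw [sub_zero] at h5
        refine h5.trans (le_of_eq ?_)
        rw [NNReal.coe_mul, coe_nnnorm, Real.coe_toNNReal _ (abs_nonneg t)]
        ring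
      exact hlip.continuous
  have hsub : (T.domain : Set H) ⊆ S := fun z hz => hdom ⟨z, hz⟩
  have hx : x ∈ closure (T.domain : Set H) := by rw [hdense.closure_eq]; trivial
  have hx2 : x ∈ closure S := closure_mono hsub hx
  rwa [hclosed.closure_eq] at hx2

lemma hsNorm_nonneg (X : H →L[ℂ] H) : 0 ≤ hsNorm e X := Real.sqrt_nonneg _

lemma duhamel_lp (hU : IsUnitaryGroup U) (hgen : IsGenerator U T)
    (hdense : Dense (T.domain : Set H)) {A B : H →L[ℂ] H}
    (hA : IsHS e A) (hBHS : IsHS e B)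
    (hm : ∀ x : T.domain, (A x : H) ∈ T.domain)
    (hB : ∀ ψ : T.domain, B ψ = commAt T A hm ψ) (t : ℝ) :
    hsToLp e (conjSup U t A) - hsToLp e A
      = ∫ s in (0:ℝ)..t, (-Complex.I) • hsToLp e (conjSup U s B) := by
  have hci : Continuous fun s : ℝ => (-Complex.I) • hsToLp e (conjSup U s B) :=
    by exact (conj_continuous e hU hBHS).const_smul (-Complex.I)
  have hii : IntervalIntegrable (fun s : ℝ => (-Complex.I) • hsToLp e (conjSup U s B))
      MeasureTheory.volume 0 t := hci.intervalIntegrable 0 t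
  ext n
  rw [lp.coeFn_sub, Pi.sub_apply, hsToLp_apply e (isHS_conjSup e hU t hA), hsToLp_apply e hA]
  have h3 := (evalCLM (H := H) n).intervalIntegral_comp_comm hii
  have h4 : (fun s : ℝ => evalCLM (H := H) n ((-Complex.I) • hsToLp e (conjSup U s B)))
      = fun s : ℝ => (-Complex.I) • conjSup U s B (e n) := by
    funext s
    rw [map_smul, evalCLM_apply, hsToLp_apply e (isHS_conjSup e hU s hBHS)]
  rw [h4] at h3
  exact (duhamel_apply hU hgen hdense hm hB t (e n)).trans h3

lemma hasLiouville_of_comm (hU : IsUnitaryGroup U) (hgen : IsGenerator U T)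
    (hdense : Dense (T.domain : Set H)) {A B : H →L[ℂ] H}
    (hA : IsHS e A) (hBHS : IsHS e B)
    (hm : ∀ x : T.domain, (A x : H) ∈ T.domain)
    (hB : ∀ ψ : T.domain, B ψ = commAt T A hm ψ) :
    HasLiouville e U A B := by
  refine ⟨hA, hBHS, ?_⟩
  rw [Metric.tendsto_nhdsWithin_nhds]
  intro ε hε
  have hcont : Continuous fun s : ℝ => hsToLp e (conjSup U s B) := conj_continuous e hU hBHS
  obtain ⟨δ, hδpos, hδ⟩ :=
    Metric.continuousAt_iff.1 (hcont.continuousAt (x := (0:ℝ))) (ε/2) (half_pos hε)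
  refine ⟨δ, hδpos, ?_⟩
  intro t ht htδ
  have htne : t ≠ 0 := by simpa using ht
  set Z : H →L[ℂ] H := t⁻¹ • (conjSup U t A - A) - (-Complex.I) • B with hZ
  have hZHS : IsHS e Z :=
    IsHS.sub e (IsHS.smul e t⁻¹ (IsHS.sub e (isHS_conjSup e hU t hA) hA))
      (IsHS.smul e (-Complex.I) hBHS)
  -- translate to lp
  have hlp : hsToLp e Z
      = t⁻¹ • (hsToLp e (conjSup U t A) - hsToLp e A) - (-Complex.I) • hsToLp e B := by
    rw [hZ, hsToLp_sub e (IsHS.smul e t⁻¹ (IsHS.sub e (isHS_conjSup e hU t hA) hA))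
        (IsHS.smul e (-Complex.I) hBHS),
      hsToLp_smul e t⁻¹ (IsHS.sub e (isHS_conjSup e hU t hA) hA),
      hsToLp_smul e (-Complex.I) hBHS,
      hsToLp_sub e (isHS_conjSup e hU t hA) hA]
  have hϕ0 : hsToLp e (conjSup U 0 B) = hsToLp e B := by rw [conjSup_zero hU]
  have hconst : ∫ _ in (0:ℝ)..t, (-Complex.I) • hsToLp e (conjSup U 0 B)
      = t • ((-Complex.I) • hsToLp e (conjSup U 0 B)) := by
    rw [intervalIntegral.integral_const, sub_zero]
  have hii : ∀ s₀ : ℝ, IntervalIntegrable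
      (fun s : ℝ => (-Complex.I) • hsToLp e (conjSup U s B)) MeasureTheory.volume 0 t :=
    fun _ => (by exact (conj_continuous e hU hBHS).const_smul (-Complex.I) :
      Continuous fun s : ℝ => (-Complex.I) • hsToLp e (conjSup U s B)).intervalIntegrable 0 t
  have hiiconst : IntervalIntegrable
      (fun _ : ℝ => (-Complex.I) • hsToLp e (conjSup U 0 B)) MeasureTheory.volume 0 t :=
    intervalIntegrable_const
  have hkey : hsToLp e Z = t⁻¹ • ∫ s in (0:ℝ)..t,
      ((-Complex.I) • hsToLp e (conjSup U s B) - (-Complex.I) • hsToLp e (conjSup U 0 B)) := by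
    rw [intervalIntegral.integral_sub (hii 0) hiiconst, hconst, smul_sub,
      inv_smul_smul₀ htne, hlp, duhamel_lp e hU hgen hdense hA hBHS hm hB t, hϕ0]
  have hnormb : ‖hsToLp e Z‖ ≤ ε / 2 := by
    rw [hkey, norm_smul]
    have hb : ∀ s ∈ Set.uIoc (0:ℝ) t,
        ‖(-Complex.I) • hsToLp e (conjSup U s B)
          - (-Complex.I) • hsToLp e (conjSup U 0 B)‖ ≤ ε / 2 := by
      intro s hs
      rw [← smul_sub, norm_smul]
      simp only [norm_neg, Complex.norm_I, one_mul]
      have habs : |s| ≤ |t| := by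
        rw [Set.mem_uIoc] at hs
        rcases hs with ⟨h1, h2⟩ | ⟨h1, h2⟩
        · rw [abs_of_pos h1]
          exact h2.trans (le_abs_self t)
        · rw [abs_of_nonpos h2]
          calc -s ≤ -t := by linarith
            _ ≤ |t| := neg_le_abs t
      have hds : dist s (0:ℝ) < δ := by
        rw [Real.dist_eq, sub_zero]
        calc |s| ≤ |t| := habs
          _ < δ := by rwa [Real.dist_eq, sub_zero] at htδ
      have h7 := hδ hds
      rw [dist_eq_norm] at h7
      exact h7.le
    have h6 := intervalIntegral.norm_integral_le_of_norm_le_const hb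
    rw [sub_zero] at h6
    calc ‖t⁻¹‖ * ‖∫ s in (0:ℝ)..t, ((-Complex.I) • hsToLp e (conjSup U s B)
          - (-Complex.I) • hsToLp e (conjSup U 0 B))‖
        ≤ ‖t⁻¹‖ * (ε / 2 * |t|) := mul_le_mul_of_nonneg_left h6 (norm_nonneg _)
      _ = ε / 2 := by
          rw [Real.norm_eq_abs, abs_inv, mul_comm (ε / 2) |t|, ← mul_assoc,
            inv_mul_cancel₀ (abs_ne_zero.2 htne), one_mul]
  rw [Real.dist_eq, sub_zero, abs_of_nonneg (hsNorm_nonneg e Z), ← norm_hsToLp e hZHS]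
  exact lt_of_le_of_lt hnormb (half_lt_self hε)

end Duhamel


end Proofs

/-- Courbage's characterization of the Liouvillian: a Hilbert–Schmidt `A`
belongs to `Dom 𝐇` iff `A · Dom H ⊆ Dom H`, the commutator `[H,A]` on `Dom H` is bounded,
and its closure (the continuous `B` agreeing with `[H,A]` on `Dom H`) is Hilbert–Schmidt;
in that case `𝐇 A = overline[H,A]`. -/
theorem statement4 (e : HilbertBasis ℕ ℂ H) (T : H →ₗ.[ℂ] H) (hT : IsSelfAdjointOp T)
    (U : ℝ → H →L[ℂ] H) (hU : IsUnitaryGroup U) (hgen : IsGenerator U T)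
    (A : H →L[ℂ] H) (hA : IsHS e A) :
    ((∃ L : H →L[ℂ] H, HasLiouville e U A L) ↔
      ∃ (hm : ∀ x : T.domain, (A x : H) ∈ T.domain) (B : H →L[ℂ] H),
        IsHS e B ∧ ∀ ψ : T.domain, B ψ = commAt T A hm ψ) ∧
    (∀ (L : H →L[ℂ] H) (hm : ∀ x : T.domain, (A x : H) ∈ T.domain) (B : H →L[ℂ] H),
      HasLiouville e U A L → (∀ ψ : T.domain, B ψ = commAt T A hm ψ) → L = B) := by
  constructor
  · constructor
    · rintro ⟨L, hL⟩
      have hm : ∀ x : T.domain, (A x : H) ∈ T.domain :=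
        fun x => (key_forward e hU hgen hL x).choose
      refine ⟨hm, L, hL.2.1, ?_⟩
      intro ψ
      obtain ⟨h, heq⟩ := key_forward e hU hgen hL ψ
      rw [commAt]
      have heq' : T ⟨A (ψ:H), hm ψ⟩ = L (ψ:H) + A (T ψ) := heq
      rw [heq']
      abel
    · rintro ⟨hm, B, hBHS, hB⟩
      exact ⟨B, hasLiouville_of_comm e hU hgen hT.1 hA hBHS hm hB⟩
  · intro L hm B hL hB
    have hag : ∀ ψ : T.domain, L (ψ:H) = B (ψ:H) := by
      intro ψ
      obtain ⟨h, heq⟩ := key_forward e hU hgen hL ψ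
      rw [hB ψ, commAt]
      have heq' : T ⟨A (ψ:H), hm ψ⟩ = L (ψ:H) + A (T ψ) := heq
      rw [heq']
      abel
    apply ContinuousLinearMap.ext_on (s := (T.domain : Set H))
      (by rw [Submodule.span_eq]; exact hT.1)
    intro x hx
    exact hag ⟨x, hx⟩


end LiouvilleFormalization
end
end

section
/- Let H be a densely defined self-adjoint operator on ℋ and A a Hilbert–Schmidt operator on ℋ, and let HA be the operator with domain {φ ∈ ℋ : Aφ ∈ Dom H}. Then the following are equivalent: (i) HA is densely defined and bounded, and its closure overline(HA) is Hilbert–Schmidt; (ii) A maps ℋ into Dom H and the everywhere-defined operator HA is Hilbert–Schmidt. Moreover, in this case overline(HA) = HA. -/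
open Filter Topology ContinuousLinearMap
open scoped InnerProductSpace

noncomputable section

namespace LiouvilleFormalization

variable {H : Type*} [NormedAddCommGroup H] [InnerProductSpace ℂ H] [CompleteSpace H]

/-- for `H` densely defined self-adjoint and `A` Hilbert–Schmidt, the
following are equivalent: (i) `HA` (domain `{φ : Aφ ∈ Dom H}`) is densely defined and
bounded and its closure (a continuous `B` agreeing with `HA` on its domain) is
Hilbert–Schmidt; (ii) `A` maps `ℋ` into `Dom H` and the everywhere-defined `HA` is
Hilbert–Schmidt.  In this case `overline(HA) = HA` (the same `B` works in both). -/
theorem statement10 (e : HilbertBasis ℕ ℂ H) (T : H →ₗ.[ℂ] H) (hT : IsSelfAdjointOp T)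
    (A : H →L[ℂ] H) (hA : IsHS e A) :
    (Dense {φ : H | A φ ∈ T.domain} ∧
      ∃ B : H →L[ℂ] H, IsHS e B ∧ ∀ (φ : H) (h : A φ ∈ T.domain), B φ = T ⟨A φ, h⟩) ↔
    (∃ (h : ∀ φ : H, A φ ∈ T.domain) (B : H →L[ℂ] H),
      IsHS e B ∧ ∀ φ : H, B φ = T ⟨A φ, h φ⟩) := by
  constructor
  · rintro ⟨hdense, B, hBhs, hB⟩
    -- symmetry of T
    have hsymm : ∀ (x y : T.domain), (inner ℂ (T x) (y : H) : ℂ) = inner ℂ (x : H) (T y) := by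
      intro x y
      have hfa := T.adjoint_isFormalAdjoint hT.1
      rw [hT.2] at hfa
      exact hfa x y
    have hmem : ∀ φ : H, A φ ∈ T.domain := by
      intro φ
      have key : ∀ x : T.domain, (inner ℂ (B φ) (x : H) : ℂ) = inner ℂ (A φ) (T x) := by
        intro x
        have hagree : ∀ ψ ∈ {φ : H | A φ ∈ T.domain},
            (fun ψ => (inner ℂ (B ψ) (x : H) : ℂ)) ψ = (fun ψ => (inner ℂ (A ψ) (T x) : ℂ)) ψ := by
          intro ψ hψ
          simp only
          rw [hB ψ hψ]
          exact hsymm ⟨A ψ, hψ⟩ x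
        have hc1 : Continuous fun ψ : H => (inner ℂ (B ψ) (x : H) : ℂ) :=
          Continuous.inner B.continuous continuous_const
        have hc2 : Continuous fun ψ : H => (inner ℂ (A ψ) (T x) : ℂ) :=
          Continuous.inner A.continuous continuous_const
        exact congrFun (Continuous.ext_on hdense hc1 hc2 hagree) φ
      have := T.mem_adjoint_domain_of_exists (A φ) ⟨B φ, key⟩
      rwa [hT.2] at this
    exact ⟨hmem, B, hBhs, fun φ => hB φ (hmem φ)⟩
  · rintro ⟨h, B, hBhs, hB⟩
    refine ⟨?_, B, hBhs, fun φ hφ => hB φ⟩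
    have : {φ : H | A φ ∈ T.domain} = Set.univ := Set.eq_univ_of_forall h
    rw [this]; exact dense_univ


end LiouvilleFormalization
end
end

section
/- Let H be a densely defined self-adjoint operator on ℋ and A a Hilbert–Schmidt operator on ℋ. Consider the conditions: (a) A maps ℋ into Dom H and both HA and HA* are (everywhere-defined) Hilbert–Schmidt operators; (b) A maps ℋ into Dom H, HA is Hilbert–Schmidt, and the closure overline(AH) of the operator AH (defined on Dom H) is Hilbert–Schmidt; (c) both closures overline(HA) and overline(AH) are Hilbert–Schmidt. Then (a), (b), and (c) are pairwise equivalent. -/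
open Filter Topology ContinuousLinearMap
open scoped InnerProductSpace

noncomputable section

namespace LiouvilleFormalization

variable {H : Type*} [NormedAddCommGroup H] [InnerProductSpace ℂ H] [CompleteSpace H]

/-- Condition (a): `A ℋ ⊆ Dom H` and both `HA` and `HA*` are everywhere defined
Hilbert–Schmidt operators. -/
def CondA (e : HilbertBasis ℕ ℂ H) (T : H →ₗ.[ℂ] H) (A : H →L[ℂ] H) : Prop :=
  ∃ (h : ∀ φ : H, A φ ∈ T.domain) (h' : ∀ φ : H, adjoint A φ ∈ T.domain)
    (B B' : H →L[ℂ] H), IsHS e B ∧ IsHS e B' ∧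
    (∀ φ : H, B φ = T ⟨A φ, h φ⟩) ∧ (∀ φ : H, B' φ = T ⟨adjoint A φ, h' φ⟩)

/-- Condition (b): `A ℋ ⊆ Dom H`, `HA` is Hilbert–Schmidt, and the closure of `AH`
(the continuous `C` agreeing with `AH` on `Dom H`) is Hilbert–Schmidt. -/
def CondB (e : HilbertBasis ℕ ℂ H) (T : H →ₗ.[ℂ] H) (A : H →L[ℂ] H) : Prop :=
  (∃ (h : ∀ φ : H, A φ ∈ T.domain) (B : H →L[ℂ] H),
    IsHS e B ∧ ∀ φ : H, B φ = T ⟨A φ, h φ⟩) ∧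
  ∃ C : H →L[ℂ] H, IsHS e C ∧ ∀ ψ : T.domain, C ψ = A (T ψ)

/-- Condition (c): both closures `overline(HA)` and `overline(AH)` are Hilbert–Schmidt
(`HA` being densely defined, with domain `{φ : Aφ ∈ Dom H}`). -/
def CondC (e : HilbertBasis ℕ ℂ H) (T : H →ₗ.[ℂ] H) (A : H →L[ℂ] H) : Prop :=
  Dense {φ : H | A φ ∈ T.domain} ∧
  (∃ B : H →L[ℂ] H, IsHS e B ∧ ∀ (φ : H) (h : A φ ∈ T.domain), B φ = T ⟨A φ, h⟩) ∧
  ∃ C : H →L[ℂ] H, IsHS e C ∧ ∀ ψ : T.domain, C ψ = A (T ψ)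


open scoped NNReal ENNReal

section Aux

variable {H : Type*} [NormedAddCommGroup H] [InnerProductSpace ℂ H] [CompleteSpace H]

lemma parseval (e : HilbertBasis ℕ ℂ H) (x : H) :
    HasSum (fun n => ‖(⟪e n, x⟫_ℂ)‖ ^ 2) (‖x‖ ^ 2) := by
  have h := e.hasSum_inner_mul_inner x x
  have h2 := h.mapL Complex.reCLM
  convert h2 using 2 with n
  · rw [← inner_conj_symm x (e n), RCLike.conj_mul]
    simp [← Complex.ofReal_pow]
  · rw [inner_self_eq_norm_sq_to_K (𝕜 := ℂ)]
    simp [← Complex.ofReal_pow]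

lemma parseval_nn (e : HilbertBasis ℕ ℂ H) (x : H) :
    ∑' n, ((‖(⟪e n, x⟫_ℂ)‖₊ : ℝ≥0∞)) ^ 2 = (‖x‖₊ : ℝ≥0∞) ^ 2 := by
  have h : HasSum (fun n => ‖(⟪e n, x⟫_ℂ)‖₊ ^ 2) (‖x‖₊ ^ 2) := by
    rw [← NNReal.hasSum_coe]
    push_cast
    exact parseval e x
  calc ∑' n, ((‖(⟪e n, x⟫_ℂ)‖₊ : ℝ≥0∞)) ^ 2
      = ∑' n, ((‖(⟪e n, x⟫_ℂ)‖₊ ^ 2 : ℝ≥0) : ℝ≥0∞) := by push_cast; rfl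
    _ = ((‖x‖₊ ^ 2 : ℝ≥0) : ℝ≥0∞) := ENNReal.tsum_coe_eq h
    _ = (‖x‖₊ : ℝ≥0∞) ^ 2 := by push_cast; rfl

lemma isHS_iff_s11 (e : HilbertBasis ℕ ℂ H) (A : H →L[ℂ] H) :
    IsHS e A ↔ (∑' n, (‖A (e n)‖₊ : ℝ≥0∞) ^ 2) ≠ ⊤ := by
  unfold IsHS
  rw [show (fun n => ‖A (e n)‖ ^ 2) = fun n => ((‖A (e n)‖₊ ^ 2 : ℝ≥0) : ℝ) by
    push_cast; rfl]
  rw [NNReal.summable_coe, ← ENNReal.tsum_coe_ne_top_iff_summable]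
  push_cast
  rfl

lemma isHS_adjoint (e : HilbertBasis ℕ ℂ H) {A : H →L[ℂ] H} (hA : IsHS e A) :
    IsHS e (adjoint A) := by
  rw [isHS_iff_s11] at hA ⊢
  calc ∑' n, (‖adjoint A (e n)‖₊ : ℝ≥0∞) ^ 2
      = ∑' n, ∑' m, (‖(⟪e m, adjoint A (e n)⟫_ℂ)‖₊ : ℝ≥0∞) ^ 2 := by
        simp [parseval_nn]
    _ = ∑' n, ∑' m, (‖(⟪e n, A (e m)⟫_ℂ)‖₊ : ℝ≥0∞) ^ 2 := by
        congr 1; funext n; congr 1; funext m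
        rw [ContinuousLinearMap.adjoint_inner_right,
          ← inner_conj_symm (A (e m)) (e n), RCLike.nnnorm_conj]
    _ = ∑' m, ∑' n, (‖(⟪e n, A (e m)⟫_ℂ)‖₊ : ℝ≥0∞) ^ 2 := ENNReal.tsum_comm
    _ = ∑' m, (‖A (e m)‖₊ : ℝ≥0∞) ^ 2 := by simp [parseval_nn]
    _ ≠ ⊤ := hA

/-- A self-adjoint operator is symmetric. -/
lemma symm_of_sa {T : H →ₗ.[ℂ] H} (hT : IsSelfAdjointOp T) (x y : T.domain) :
    (⟪T x, (y : H)⟫_ℂ) = ⟪(x : H), T y⟫_ℂ := by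
  obtain ⟨hd, heq⟩ := hT
  obtain ⟨hdom, happ⟩ := LinearPMap.ext_iff.mp heq
  have hx' : (x : H) ∈ T.adjoint.domain := by rw [hdom]; exact x.2
  have hTx : T.adjoint ⟨(x : H), hx'⟩ = T x := happ (x := (x : H)) (hf := hx') (hg := x.2)
  rw [← hTx]
  exact LinearPMap.adjoint_isFormalAdjoint hd ⟨(x : H), hx'⟩ y

/-- Membership + value criterion for the domain of a self-adjoint operator. -/
lemma mem_and_val {T : H →ₗ.[ℂ] H} (hT : IsSelfAdjointOp T) (y w : H)
    (hyw : ∀ x : T.domain, (⟪T x, y⟫_ℂ) = ⟪(x : H), w⟫_ℂ) :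
    ∃ hy : y ∈ T.domain, T ⟨y, hy⟩ = w := by
  obtain ⟨hd, heq⟩ := hT
  obtain ⟨hdom, happ⟩ := LinearPMap.ext_iff.mp heq
  have key : ∀ x : T.domain, (⟪w, (x : H)⟫_ℂ) = ⟪y, T x⟫_ℂ := fun x => by
    rw [← inner_conj_symm w (x : H), ← hyw x, inner_conj_symm]
  have hy' : y ∈ T.adjoint.domain :=
    LinearPMap.mem_adjoint_domain_of_exists y ⟨w, key⟩
  have hval : T.adjoint ⟨y, hy'⟩ = w :=
    LinearPMap.adjoint_apply_eq hd ⟨y, hy'⟩ key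
  have hy : y ∈ T.domain := by rw [← hdom]; exact hy'
  exact ⟨hy, by rw [← happ (x := y) (hf := hy') (hg := hy), hval]⟩

end Aux


section Main

variable {H : Type*} [NormedAddCommGroup H] [InnerProductSpace ℂ H] [CompleteSpace H]

lemma condA_to_condB (e : HilbertBasis ℕ ℂ H) (T : H →ₗ.[ℂ] H) (hT : IsSelfAdjointOp T)
    {A : H →L[ℂ] H} (h : CondA e T A) : CondB e T A := by
  obtain ⟨h, h', B, B', hB, hB', hBe, hB'e⟩ := h
  refine ⟨⟨h, B, hB, hBe⟩, adjoint B', isHS_adjoint e hB', fun ψ => ?_⟩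
  apply ext_inner_right ℂ
  intro φ
  rw [ContinuousLinearMap.adjoint_inner_left, hB'e φ,
    ← symm_of_sa hT ψ ⟨adjoint A φ, h' φ⟩, ContinuousLinearMap.adjoint_inner_right]

lemma condB_to_condA (e : HilbertBasis ℕ ℂ H) (T : H →ₗ.[ℂ] H) (hT : IsSelfAdjointOp T)
    {A : H →L[ℂ] H} (hb : CondB e T A) : CondA e T A := by
  obtain ⟨⟨h, B, hB, hBe⟩, C, hC, hCe⟩ := hb
  have key : ∀ φ : H, ∃ hy : adjoint A φ ∈ T.domain,
      T ⟨adjoint A φ, hy⟩ = adjoint C φ := by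
    intro φ
    apply mem_and_val hT
    intro ψ
    rw [ContinuousLinearMap.adjoint_inner_right, ContinuousLinearMap.adjoint_inner_right,
      hCe ψ]
  refine ⟨h, fun φ => (key φ).choose, B, adjoint C, hB, isHS_adjoint e hC, hBe,
    fun φ => ((key φ).choose_spec).symm⟩

lemma condB_to_condC (e : HilbertBasis ℕ ℂ H) (T : H →ₗ.[ℂ] H)
    {A : H →L[ℂ] H} (hb : CondB e T A) : CondC e T A := by
  obtain ⟨⟨h, B, hB, hBe⟩, C, hC, hCe⟩ := hb
  refine ⟨?_, ⟨B, hB, fun φ hφ => ?_⟩, C, hC, hCe⟩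
  · have hs : {φ : H | A φ ∈ T.domain} = Set.univ := Set.eq_univ_of_forall h
    rw [hs]
    exact dense_univ
  · rw [hBe φ]

lemma condC_to_condB (e : HilbertBasis ℕ ℂ H) (T : H →ₗ.[ℂ] H) (hT : IsSelfAdjointOp T)
    {A : H →L[ℂ] H} (hc : CondC e T A) : CondB e T A := by
  obtain ⟨hD, ⟨B, hB, hBe⟩, C, hC, hCe⟩ := hc
  have key : ∀ φ : H, ∃ hy : A φ ∈ T.domain, T ⟨A φ, hy⟩ = B φ := by
    intro φ
    apply mem_and_val hT
    intro ψ
    have hcont1 : Continuous fun φ : H => (⟪T ψ, A φ⟫_ℂ) :=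
      continuous_const.inner A.continuous
    have hcont2 : Continuous fun φ : H => (⟪(ψ : H), B φ⟫_ℂ) :=
      continuous_const.inner B.continuous
    have heq : Set.EqOn (fun φ : H => (⟪T ψ, A φ⟫_ℂ)) (fun φ : H => (⟪(ψ : H), B φ⟫_ℂ))
        {φ : H | A φ ∈ T.domain} := by
      intro φ hφ
      calc (⟪T ψ, A φ⟫_ℂ) = ⟪(ψ : H), T ⟨A φ, hφ⟩⟫_ℂ := symm_of_sa hT ψ ⟨A φ, hφ⟩
        _ = ⟪(ψ : H), B φ⟫_ℂ := by rw [hBe φ hφ]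
    exact congrFun (Continuous.ext_on hD hcont1 hcont2 heq) φ
  exact ⟨⟨fun φ => (key φ).choose, B, hB, fun φ => ((key φ).choose_spec).symm⟩, C, hC, hCe⟩

end Main

/-- conditions (a), (b), (c) are pairwise equivalent. -/
theorem statement11 (e : HilbertBasis ℕ ℂ H) (T : H →ₗ.[ℂ] H) (hT : IsSelfAdjointOp T)
    (A : H →L[ℂ] H) (hA : IsHS e A) :
    (CondA e T A ↔ CondB e T A) ∧ (CondB e T A ↔ CondC e T A) ∧
    (CondA e T A ↔ CondC e T A) := by
  have hAB : CondA e T A ↔ CondB e T A :=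
    ⟨condA_to_condB e T hT, condB_to_condA e T hT⟩
  have hBC : CondB e T A ↔ CondC e T A :=
    ⟨condB_to_condC e T, condC_to_condB e T hT⟩
  exact ⟨hAB, hBC, hAB.trans hBC⟩

end LiouvilleFormalization
end
end

section
/- Let H be a densely defined self-adjoint operator on ℋ that is positive and bijective from Dom H onto ℋ, whose inverse H⁻¹ is a Hilbert–Schmidt operator. Then H⁻¹ ∈ Dom 𝐇 with 𝐇(H⁻¹) = 0, yet H⁻¹ does not belong to 𝒟 = {A ∈ 𝓛(ℋ) : A ℋ ⊆ Dom H and HA, HA* are Hilbert–Schmidt}, because H·H⁻¹ is the identity operator, which is not Hilbert–Schmidt on an infinite-dimensional space. In particular, 𝒟 is a proper subspace of Dom 𝐇. -/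
open Filter Topology ContinuousLinearMap
open scoped InnerProductSpace

noncomputable section

namespace LiouvilleFormalization

variable {H : Type*} [NormedAddCommGroup H] [InnerProductSpace ℂ H] [CompleteSpace H]

/-- Membership in `𝒟 = {A ∈ 𝓛(ℋ) : A ℋ ⊆ Dom H and HA, HA* are Hilbert–Schmidt}`. -/
def MemD (e : HilbertBasis ℕ ℂ H) (T : H →ₗ.[ℂ] H) (A : H →L[ℂ] H) : Prop :=
  IsHS e A ∧
  ∃ (h : ∀ φ : H, A φ ∈ T.domain) (h' : ∀ φ : H, adjoint A φ ∈ T.domain)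
    (B B' : H →L[ℂ] H), IsHS e B ∧ IsHS e B' ∧
    (∀ φ : H, B φ = T ⟨A φ, h φ⟩) ∧ (∀ φ : H, B' φ = T ⟨adjoint A φ, h' φ⟩)

/-- if `H` is densely defined, self-adjoint, positive, and a bijection from
`Dom H` onto `ℋ` whose inverse `H⁻¹` is Hilbert–Schmidt, then `H⁻¹ ∈ Dom 𝐇` with
`𝐇(H⁻¹) = 0`, yet `H⁻¹ ∉ 𝒟` (indeed `H·H⁻¹ = 1`, which is not Hilbert–Schmidt in infinite
dimension); in particular `𝒟` is a proper subspace of `Dom 𝐇`. -/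
theorem statement18 (e : HilbertBasis ℕ ℂ H) (T : H →ₗ.[ℂ] H) (hT : IsSelfAdjointOp T)
    (U : ℝ → H →L[ℂ] H) (hU : IsUnitaryGroup U) (hgen : IsGenerator U T)
    (hpos : ∀ ψ : T.domain, 0 ≤ (inner ℂ ((ψ : H)) (T ψ) : ℂ).re)
    (Hinv : H →L[ℂ] H) (hHinvHS : IsHS e Hinv)
    (hmem : ∀ φ : H, Hinv φ ∈ T.domain)
    (hright : ∀ φ : H, T ⟨Hinv φ, hmem φ⟩ = φ)
    (hleft : ∀ ψ : T.domain, Hinv (T ψ) = ψ) :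
    HasLiouville e U Hinv 0 ∧ ¬ IsHS e (1 : H →L[ℂ] H) ∧ ¬ MemD e T Hinv := by
  -- The group commutes with itself
  have hcomm : ∀ t s : ℝ, U t ∘L U s = U s ∘L U t := by
    intro t s
    rw [← hU.map_add, ← hU.map_add, add_comm]
  -- U s preserves Dom T and commutes with T
  have hpres : ∀ (s : ℝ) (ψ : T.domain), ∃ h : U s (ψ : H) ∈ T.domain,
      T ⟨U s (ψ : H), h⟩ = U s (T ψ) := by
    intro s ψ
    have h1 := hgen.deriv ψ
    have h2 : Tendsto (fun t : ℝ => t⁻¹ • (U t (U s (ψ : H)) - U s (ψ : H))) (𝓝[≠] 0)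
        (𝓝 (U s ((-Complex.I) • T ψ))) := by
      have h3 := ((U s).continuous.tendsto _).comp h1
      refine h3.congr fun t => ?_
      simp only [Function.comp]
      rw [ContinuousLinearMap.map_smul_of_tower, map_sub]
      congr 2
      have h4 := congrArg (fun A : H →L[ℂ] H => A (ψ : H)) (hcomm t s)
      simpa using h4.symm
    have hm : U s (ψ : H) ∈ T.domain := (hgen.mem_dom _).mpr ⟨_, h2⟩
    refine ⟨hm, ?_⟩
    have h3 := hgen.deriv ⟨U s (ψ : H), hm⟩
    have h5 := tendsto_nhds_unique h3 h2
    rw [map_smul] at h5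
    have hI : (-Complex.I) ≠ 0 := by simp [Complex.I_ne_zero]
    exact smul_right_injective H hI h5
  -- Hinv commutes with U s
  have hHU : ∀ (s : ℝ) (φ : H), Hinv (U s φ) = U s (Hinv φ) := by
    intro s φ
    obtain ⟨hm, hTeq⟩ := hpres s ⟨Hinv φ, hmem φ⟩
    have h6 : T ⟨U s (Hinv φ), hm⟩ = U s φ := by
      rw [hTeq, hright]
    have h7 := hleft ⟨U s (Hinv φ), hm⟩
    rw [h6] at h7
    exact h7
  -- conjugation fixes Hinv
  have hconj : ∀ t : ℝ, conjSup U t Hinv = Hinv := by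
    intro t
    ext φ
    have h8 : U t (Hinv (adjoint (U t) φ)) = Hinv (U t (adjoint (U t) φ)) :=
      (hHU t _).symm
    have h9 : U t (adjoint (U t) φ) = φ := by
      have := congrArg (fun A : H →L[ℂ] H => A φ) (hU.unitary_right t)
      simpa using this
    simp only [conjSup, ContinuousLinearMap.comp_apply]
    rw [h8, h9]
  -- not HS: the identity
  have hnotHS1 : ¬ IsHS e (1 : H →L[ℂ] H) := by
    intro hs
    have h10 : Summable (fun _ : ℕ => (1 : ℝ)) :=
      hs.congr fun n => by simp [e.orthonormal.1 n]
    exact one_ne_zero ((summable_const_iff (1:ℝ)).mp h10)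
  refine ⟨⟨hHinvHS, ?_, ?_⟩, hnotHS1, ?_⟩
  · -- IsHS e 0
    exact summable_zero.congr fun n => by simp
  · -- the difference quotient tends to 0
    have h11 : ∀ t : ℝ,
        hsNorm e (t⁻¹ • (conjSup U t Hinv - Hinv) - (-Complex.I) • (0 : H →L[ℂ] H)) = 0 := by
      intro t
      rw [hconj t]
      simp [hsNorm]
    refine Tendsto.congr (fun t => (h11 t).symm) ?_
    exact tendsto_const_nhds
  · -- not in 𝒟
    rintro ⟨-, h, h', B, B', hBhs, -, hB, -⟩
    apply hnotHS1
    have h12 : ∀ n : ℕ, B (e n) = (1 : H →L[ℂ] H) (e n) := by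
      intro n
      rw [hB]
      have : (⟨Hinv (e n), h (e n)⟩ : T.domain) = ⟨Hinv (e n), hmem (e n)⟩ := rfl
      rw [this, hright]
      simp
    exact hBhs.congr fun n => by rw [h12 n]

end LiouvilleFormalization
end
end
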